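/- In the setting of the simplicial lemma for a torsor, if 1 → H → G → F → 1 is an exact sequence of group objects and G is regarded as an H_F-torsor over F via right translation through i : H → G, then the connecting map φ : F(G) → F(H) of the lemma equals F(i). -/

import Mathlib

/-!
STATEMENT 8. Let `1 → H → G → K → 1` be an exact sequence of `S`-group schemes and
regard `G` as an `H_K`-torsor over `K` via right translation through `i : H → G`.
Then the connecting map `φ = pr_{F(H)} ∘ ψ_{G,H}⁻¹ ∘ F(σ) : F(G) → F(H)` of the
simplicial lemma (where `σ : G ×_S H → G` is `(g, h) ↦ g · i(h)` and
`ψ_{G,H} : F(G) ⊕ F(H) → F(G ×_S H)` is the product isomorphism) equals `F(i)`,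
for any abelian presheaf `F` on `S`-schemes with `F(S) = 0` for which `ψ_{G,H}` is
bijective.
-/

open AlgebraicGeometry CategoryTheory Opposite Limits

universe u

structure SchGroupOver (S : Scheme.{u}) where
  X : Over S
  grp : ∀ T : Over S, Group (T ⟶ X)
  comp_mul : ∀ {T T' : Over S} (f : T' ⟶ T) (a b : T ⟶ X),
    letI := grp T; letI := grp T'
    f ≫ (a * b) = (f ≫ a) * (f ≫ b)

attribute [instance] SchGroupOver.grp

variable {S : Scheme.{u}}

structure SchGroupHom (G H : SchGroupOver S) where
  hom : G.X ⟶ H.X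
  map_mul : ∀ (T : Over S) (a b : T ⟶ G.X), (a * b) ≫ hom = (a ≫ hom) * (b ≫ hom)

/-- A morphism of schemes is flat if all of its stalk maps are flat. -/
def IsFlatMorphism {X Y : Scheme.{u}} (f : X ⟶ Y) : Prop :=
  ∀ x : X, letI := (f.stalkMap x).hom.toAlgebra
    Module.Flat (Y.presheaf.stalk (f.base x)) (X.presheaf.stalk x)


/-- Precomposition with a morphism preserves the unit of the group structure. -/
lemma SchGroupOver.comp_one (G : SchGroupOver S) {T T' : Over S} (f : T' ⟶ T) :
    f ≫ (1 : T ⟶ G.X) = 1 := by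
  have h := G.comp_mul f (1 : T ⟶ G.X) 1
  rw [one_mul] at h
  -- `h : f ≫ 1 = (f ≫ 1) * (f ≫ 1)`
  have h' : (f ≫ (1 : T ⟶ G.X)) * 1 = (f ≫ 1) * (f ≫ 1) := by
    rw [mul_one]; exact h
  exact (mul_left_cancel h').symm

theorem phi_eq_F_of_i_for_group_extension
    (H G K : SchGroupOver S) (i : SchGroupHom H G) (p : SchGroupHom G K)
    -- exactness of `1 → H → G → K → 1` as fppf sheaves
    (hinj : ∀ T : Over S, Function.Injective (fun a : T ⟶ H.X => a ≫ i.hom))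
    (hker : ∀ (T : Over S) (b : T ⟶ G.X), b ≫ p.hom = 1 ↔ ∃ a : T ⟶ H.X, a ≫ i.hom = b)
    (hpflat : IsFlatMorphism p.hom.left) [AlgebraicGeometry.Surjective p.hom.left]
    [LocallyOfFinitePresentation p.hom.left]
    -- the abelian presheaf `F` (here `P`) with `P(S) = 0`
    (P : (Over S)ᵒᵖ ⥤ AddCommGrpCat.{u})
    (hP0 : IsZero (P.obj (op (Over.mk (𝟙 S))))) :
    -- `G ×_S H` with its two projections, as an `S`-scheme
    letI OvGH : Over S := Over.mk (pullback.fst G.X.hom H.X.hom ≫ G.X.hom)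
    letI a : OvGH ⟶ G.X := Over.homMk (pullback.fst G.X.hom H.X.hom) rfl
    letI b : OvGH ⟶ H.X := Over.homMk (pullback.snd G.X.hom H.X.hom)
      pullback.condition.symm
    -- the right-translation action `σ : G ×_S H ⟶ G`, `(g, h) ↦ g · i(h)`
    letI σOv : OvGH ⟶ G.X := a * (b ≫ i.hom)
    -- the sum map `ψ_{G,H}`
    letI ψGH : ↑(P.obj (op G.X)) × ↑(P.obj (op H.X)) → ↑(P.obj (op OvGH)) :=
      fun q => P.map a.op q.1 + P.map b.op q.2
    ∀ hψ : Function.Bijective ψGH,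
      ∀ x : ↑(P.obj (op G.X)),
        ((Equiv.ofBijective ψGH hψ).symm (P.map σOv.op x)).2 = P.map i.hom.op x := by
  intro hψ x
  classical
  set OvGH : Over S := Over.mk (pullback.fst G.X.hom H.X.hom ≫ G.X.hom) with hOvGH
  set a : OvGH ⟶ G.X := Over.homMk (pullback.fst G.X.hom H.X.hom) rfl with ha
  set b : OvGH ⟶ H.X := Over.homMk (pullback.snd G.X.hom H.X.hom)
    pullback.condition.symm with hb
  set σOv : OvGH ⟶ G.X := a * (b ≫ i.hom) with hσ
  set ψGH : ↑(P.obj (op G.X)) × ↑(P.obj (op H.X)) → ↑(P.obj (op OvGH)) :=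
    fun q => P.map a.op q.1 + P.map b.op q.2 with hψdef
  -- the `S`-point object and the unit section
  set Spt : Over S := Over.mk (𝟙 S) with hSpt
  set e : Spt ⟶ G.X := 1 with he
  set u : H.X ⟶ Spt := Over.homMk H.X.hom (by simp [Spt]) with hu
  have hcond : (u ≫ e).left ≫ G.X.hom = 𝟙 H.X.left ≫ H.X.hom := by
    simpa using Over.w (u ≫ e)
  set tl : H.X.left ⟶ pullback G.X.hom H.X.hom :=
    pullback.lift (u ≫ e).left (𝟙 H.X.left) hcond with htl
  have ht_w : tl ≫ (pullback.fst G.X.hom H.X.hom ≫ G.X.hom) = H.X.hom := by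
    rw [← Category.assoc, htl, pullback.lift_fst]
    simpa using Over.w (u ≫ e)
  set t : H.X ⟶ OvGH := Over.homMk tl ht_w with ht
  have hta : t ≫ a = u ≫ e := by
    apply Over.OverMorphism.ext
    exact pullback.lift_fst _ _ _
  have htb : t ≫ b = 𝟙 H.X := by
    apply Over.OverMorphism.ext
    exact pullback.lift_snd _ _ _
  have hue : u ≫ e = 1 := G.comp_one u
  have hta1 : t ≫ a = 1 := hta.trans hue
  have htσ : t ≫ σOv = i.hom := by
    have h := G.comp_mul t a (b ≫ i.hom)
    rw [hta1, ← Category.assoc, htb, Category.id_comp, one_mul] at h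
    exact h
  -- `P` kills any morphism factoring through `Spt`
  have hPone : ∀ y : ↑(P.obj (op G.X)), P.map (Quiver.Hom.op (1 : H.X ⟶ G.X)) y = 0 := by
    intro y
    rw [← hue]
    have h1 : (u ≫ e).op = e.op ≫ u.op := rfl
    rw [h1, P.map_comp]
    have hz : P.map e.op y = 0 := by
      have h0 : (𝟙 (P.obj (op Spt))) = (0 : P.obj (op Spt) ⟶ P.obj (op Spt)) :=
        hP0.eq_of_src _ _
      calc P.map e.op y = (𝟙 (P.obj (op Spt))) (P.map e.op y) := rfl
        _ = (0 : P.obj (op Spt) ⟶ P.obj (op Spt)) (P.map e.op y) := by rw [h0]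
        _ = 0 := rfl
    show P.map u.op (P.map e.op y) = 0
    rw [hz, map_zero]
  -- main computation
  set q := (Equiv.ofBijective ψGH hψ).symm (P.map σOv.op x) with hqdef
  have hq : ψGH q = P.map σOv.op x :=
    (Equiv.ofBijective ψGH hψ).apply_symm_apply (P.map σOv.op x)
  have happ : P.map t.op (ψGH q) = P.map t.op (P.map σOv.op x) := by rw [hq]
  -- left-hand side
  have lhs : P.map t.op (ψGH q) = q.2 := by
    show P.map t.op (P.map a.op q.1 + P.map b.op q.2) = q.2
    rw [map_add]
    have h1 : P.map t.op (P.map a.op q.1) = P.map (t ≫ a).op q.1 := by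
      rw [show (t ≫ a).op = a.op ≫ t.op from rfl, P.map_comp]; rfl
    have h2 : P.map t.op (P.map b.op q.2) = P.map (t ≫ b).op q.2 := by
      rw [show (t ≫ b).op = b.op ≫ t.op from rfl, P.map_comp]; rfl
    rw [h1, h2, hta1, htb, hPone]
    simp
  have rhs : P.map t.op (P.map σOv.op x) = P.map i.hom.op x := by
    rw [show P.map t.op (P.map σOv.op x) = P.map (t ≫ σOv).op x from by
      rw [show (t ≫ σOv).op = σOv.op ≫ t.op from rfl, P.map_comp]; rfl, htσ]
  rw [lhs, rhs] at happ
  exact happ
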